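/- Let d₁, d₂, p₂ be real numbers with d₁ > 0, d₂ > 0, 0 < p₂ < d₁, and define r₁(λ) = (2d₁ − 2p₂)/(4d₁) + (p₂/(4d₁))λ² and r₂(λ) = −1/2 − (p₂/(2d₂))λ. Then: (i) for real numbers t₁, t₂ there exist c > 0 and λ > 0 with r₁(λ) = c·t₁ and r₂(λ) = c·t₂ if and only if t₁ > 0, t₂ < 0, and t₁/t₂ ≤ d₂²/(d₁p₂) − (d₂/d₁)·√(d₂²/p₂² + (2d₁ − 2p₂)/p₂); and (ii) there exist two such pairs (c, λ), (c′, λ′) with c ≠ c′ if and only if, in addition, −(d₁ − p₂)/d₁ < t₁/t₂ < d₂²/(d₁p₂) − (d₂/d₁)·√(d₂²/p₂² + (2d₁ − 2p₂)/p₂). -/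

import Mathlib

set_option maxHeartbeats 2000000 in
theorem stmt_7 (d₁ d₂ p₂ : ℝ) (hd₁ : 0 < d₁) (hd₂ : 0 < d₂)
    (hp₂ : 0 < p₂) (hp₂d : p₂ < d₁)
    (r₁ r₂ : ℝ → ℝ)
    (hr₁ : ∀ l : ℝ, r₁ l = (2*d₁ - 2*p₂)/(4*d₁) + (p₂/(4*d₁))*l^2)
    (hr₂ : ∀ l : ℝ, r₂ l = -1/2 - (p₂/(2*d₂))*l)
    (t₁ t₂ : ℝ) :
    ((∃ c l : ℝ, 0 < c ∧ 0 < l ∧ r₁ l = c * t₁ ∧ r₂ l = c * t₂) ↔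
      (0 < t₁ ∧ t₂ < 0 ∧
        t₁/t₂ ≤ d₂^2/(d₁*p₂) -
          (d₂/d₁) * Real.sqrt (d₂^2/p₂^2 + (2*d₁ - 2*p₂)/p₂))) ∧
    ((∃ c l c' l' : ℝ, 0 < c ∧ 0 < c' ∧ 0 < l ∧ 0 < l' ∧ c ≠ c' ∧
        r₁ l = c * t₁ ∧ r₂ l = c * t₂ ∧ r₁ l' = c' * t₁ ∧ r₂ l' = c' * t₂) ↔
      (0 < t₁ ∧ t₂ < 0 ∧
        -(d₁ - p₂)/d₁ < t₁/t₂ ∧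
        t₁/t₂ < d₂^2/(d₁*p₂) -
          (d₂/d₁) * Real.sqrt (d₂^2/p₂^2 + (2*d₁ - 2*p₂)/p₂))) := by
  have hd₁0 : d₁ ≠ 0 := hd₁.ne'
  have hd₂0 : d₂ ≠ 0 := hd₂.ne'
  have hp₂0 : p₂ ≠ 0 := hp₂.ne'
  have harg : (0:ℝ) ≤ d₂^2/p₂^2 + (2*d₁ - 2*p₂)/p₂ := by
    have h1 : (0:ℝ) ≤ d₂^2/p₂^2 := by positivity
    have h2 : (0:ℝ) ≤ (2*d₁-2*p₂)/p₂ := div_nonneg (by linarith) hp₂.le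
    linarith
  set s : ℝ := Real.sqrt (d₂^2/p₂^2 + (2*d₁ - 2*p₂)/p₂) with hs_def
  clear_value s
  have hs2 : s^2 = d₂^2/p₂^2 + (2*d₁-2*p₂)/p₂ := by rw [hs_def]; exact Real.sq_sqrt harg
  have hsgt : d₂/p₂ < s := by
    rw [hs_def, show d₂/p₂ = Real.sqrt ((d₂/p₂)^2) from (Real.sqrt_sq (by positivity)).symm]
    apply Real.sqrt_lt_sqrt (by positivity)
    have h3 : (0:ℝ) < (2*d₁-2*p₂)/p₂ := div_pos (by linarith) hp₂
    have h4 : (d₂/p₂)^2 = d₂^2/p₂^2 := by ring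
    linarith
  set b : ℝ := d₂^2/(d₁*p₂) - (d₂/d₁)*s with hb_def
  clear_value b
  have hbneg : b < 0 := by
    rw [hb_def]
    have h5 : d₂^2/(d₁*p₂) = (d₂/d₁)*(d₂/p₂) := by field_simp
    rw [h5]
    have hpos : (0:ℝ) < d₂/d₁ := by positivity
    nlinarith [hsgt]
  have key : p₂^2*s^2 = d₂^2 + (2*d₁-2*p₂)*p₂ := by
    rw [hs2]; field_simp
  have hb' : d₁*p₂*b = d₂^2 - d₂*p₂*s := by rw [hb_def]; field_simp
  have hEb : p₂*d₁^2*b^2 - 2*d₁*d₂^2*b - 2*d₂^2*(d₁-p₂) = 0 := by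
    have h0 : p₂ * (p₂*d₁^2*b^2 - 2*d₁*d₂^2*b - 2*d₂^2*(d₁-p₂)) = 0 := by
      linear_combination (d₁*p₂*b + d₂^2 - d₂*p₂*s - 2*d₂^2) * hb' + d₂^2 * key
    rcases mul_eq_zero.1 h0 with h | h
    · exact absurd h hp₂0
    · exact h
  -- factorization of Et
  have hfac : p₂*d₁^2*t₁^2 - 2*d₁*d₂^2*t₁*t₂ - 2*d₂^2*(d₁-p₂)*t₂^2
      = (t₁ - b*t₂)*(p₂*d₁^2*(t₁ + b*t₂) - 2*d₁*d₂^2*t₂) := by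
    linear_combination (t₂^2) * hEb
  -- factor2 positivity
  have hf2 : 0 < t₁ → t₂ < 0 → 0 < p₂*d₁^2*(t₁ + b*t₂) - 2*d₁*d₂^2*t₂ := by
    intro ht₁ ht₂
    have h1 : 0 < t₁ + b*t₂ := by nlinarith [mul_pos (neg_pos.2 hbneg) (neg_pos.2 ht₂)]
    have h2 : 0 < p₂*d₁^2*(t₁ + b*t₂) := by positivity
    have h3 : 0 < (2*d₁*d₂^2)*(-t₂) := mul_pos (by positivity) (by linarith)
    nlinarith
  -- forward extraction: from a solution pair get signs and the cleared quadratic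
  have fwd : ∀ c l : ℝ, 0 < c → 0 < l → r₁ l = c*t₁ → r₂ l = c*t₂ →
      0 < t₁ ∧ t₂ < 0 ∧
      p₂*d₂*t₂*l^2 + 2*d₁*p₂*t₁*l + 2*d₂*(d₁-p₂)*t₂ + 2*d₁*d₂*t₁ = 0 := by
    intro c l hc hl h1 h2
    have hr1pos : 0 < r₁ l := by
      rw [hr₁ l]
      have ha : (0:ℝ) < (2*d₁-2*p₂)/(4*d₁) := div_pos (by linarith) (by linarith)
      have hb2 : (0:ℝ) ≤ (p₂/(4*d₁))*l^2 := by positivity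
      linarith
    have hr2neg : r₂ l < 0 := by
      rw [hr₂ l]
      have : (0:ℝ) < (p₂/(2*d₂))*l := by positivity
      linarith
    have ht₁ : 0 < t₁ := by
      by_contra h
      push_neg at h
      have h0 : 0 ≤ c * (-t₁) := mul_nonneg hc.le (by linarith)
      nlinarith [h0, hr1pos, h1]
    have ht₂ : t₂ < 0 := by
      by_contra h
      push_neg at h
      have h0 : 0 ≤ c * t₂ := mul_nonneg hc.le h
      nlinarith [h0, hr2neg, h2]
    refine ⟨ht₁, ht₂, ?_⟩
    have hcross : r₁ l * t₂ = r₂ l * t₁ := by rw [h1, h2]; ring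
    rw [hr₁ l, hr₂ l] at hcross
    field_simp at hcross
    linear_combination (1/2) * hcross
  -- builder: from positive root of cleared quadratic get a solution pair with c = r₂ l / t₂
  have mk : t₂ < 0 → ∀ l : ℝ, 0 < l →
      p₂*d₂*t₂*l^2 + 2*d₁*p₂*t₁*l + 2*d₂*(d₁-p₂)*t₂ + 2*d₁*d₂*t₁ = 0 →
      0 < r₂ l / t₂ ∧ r₁ l = (r₂ l / t₂)*t₁ ∧ r₂ l = (r₂ l / t₂)*t₂ := by
    intro ht₂ l hl hq
    have ht₂0 : t₂ ≠ 0 := ht₂.ne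
    have hr2neg : r₂ l < 0 := by
      rw [hr₂ l]
      have : (0:ℝ) < (p₂/(2*d₂))*l := by positivity
      linarith
    have hcpos : 0 < r₂ l / t₂ := div_pos_of_neg_of_neg hr2neg ht₂
    have hcross : r₁ l * t₂ = r₂ l * t₁ := by
      rw [hr₁ l, hr₂ l]
      field_simp
      linear_combination 2 * hq
    refine ⟨hcpos, ?_, ?_⟩
    · field_simp
      linear_combination hcross
    · field_simp
  constructor
  · constructor
    · rintro ⟨c, l, hc, hl, h1, h2⟩
      obtain ⟨ht₁, ht₂, hq⟩ := fwd c l hc hl h1 h2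
      refine ⟨ht₁, ht₂, ?_⟩
      rw [div_le_iff_of_neg ht₂]
      -- Et ≥ 0
      have hEt : p₂*d₁^2*t₁^2 - 2*d₁*d₂^2*t₁*t₂ - 2*d₂^2*(d₁-p₂)*t₂^2
          = p₂*(d₂*t₂*l + d₁*t₁)^2 := by linear_combination (-(d₂*t₂)) * hq
      have hEt0 : 0 ≤ p₂*d₁^2*t₁^2 - 2*d₁*d₂^2*t₁*t₂ - 2*d₂^2*(d₁-p₂)*t₂^2 := by
        rw [hEt]; positivity
      have hf := hf2 ht₁ ht₂
      have hnn : 0 ≤ (t₁ - b*t₂)*(p₂*d₁^2*(t₁ + b*t₂) - 2*d₁*d₂^2*t₂) := by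
        rw [← hfac]; exact hEt0
      by_contra hcon
      push_neg at hcon
      have : (t₁ - b*t₂)*(p₂*d₁^2*(t₁ + b*t₂) - 2*d₁*d₂^2*t₂) < 0 :=
        mul_neg_of_neg_of_pos (by linarith) hf
      linarith
    · rintro ⟨ht₁, ht₂, hle⟩
      have ht₂0 : t₂ ≠ 0 := ht₂.ne
      rw [div_le_iff_of_neg ht₂] at hle
      have hEt0 : 0 ≤ p₂*d₁^2*t₁^2 - 2*d₁*d₂^2*t₁*t₂ - 2*d₂^2*(d₁-p₂)*t₂^2 := by
        have hf := hf2 ht₁ ht₂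
        rw [hfac]
        exact mul_nonneg (by linarith) hf.le
      set Et : ℝ := p₂*d₁^2*t₁^2 - 2*d₁*d₂^2*t₁*t₂ - 2*d₂^2*(d₁-p₂)*t₂^2 with hEt_def
      clear_value Et
      have hσarg : (0:ℝ) ≤ p₂*Et := by positivity
      set σ : ℝ := Real.sqrt (p₂*Et) with hσ_def
      have hσ2 : σ^2 = p₂*Et := Real.sq_sqrt hσarg
      have hσ0 : 0 ≤ σ := Real.sqrt_nonneg _
      clear_value σ
      set l : ℝ := (d₁*p₂*t₁ + σ)/(p₂*d₂*(-t₂)) with hl_def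
      clear_value l
      have hden : 0 < p₂*d₂*(-t₂) := by
        apply mul_pos (mul_pos hp₂ hd₂); linarith
      have hl : 0 < l := by
        rw [hl_def]
        apply div_pos _ hden
        have : 0 < d₁*p₂*t₁ := by positivity
        linarith
      have hlq : (p₂*d₂*(-t₂))*l = d₁*p₂*t₁ + σ := by
        rw [hl_def]; field_simp
      have hq : p₂*d₂*t₂*l^2 + 2*d₁*p₂*t₁*l + 2*d₂*(d₁-p₂)*t₂ + 2*d₁*d₂*t₁ = 0 := by
        have h0 : (p₂*d₂*(-t₂)) * (p₂*d₂*t₂*l^2 + 2*d₁*p₂*t₁*l + 2*d₂*(d₁-p₂)*t₂ + 2*d₁*d₂*t₁) = 0 := by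
          rw [hEt_def] at hσ2
          linear_combination (2*d₁*p₂*t₁ - (p₂*d₂*(-t₂)*l + (d₁*p₂*t₁+σ))) * hlq - hσ2
        rcases mul_eq_zero.1 h0 with h | h
        · exact absurd h hden.ne'
        · exact h
      obtain ⟨hc, h1, h2⟩ := mk ht₂ l hl hq
      exact ⟨r₂ l / t₂, l, hc, hl, h1, h2⟩
  · constructor
    · rintro ⟨c, l, c', l', hc, hc', hl, hl', hne, h1, h2, h1', h2'⟩
      obtain ⟨ht₁, ht₂, hq⟩ := fwd c l hc hl h1 h2
      obtain ⟨-, -, hq'⟩ := fwd c' l' hc' hl' h1' h2'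
      have ht₂0 : t₂ ≠ 0 := ht₂.ne
      have hll' : l ≠ l' := by
        intro h
        apply hne
        rw [h] at h2
        have := h2.symm.trans h2'
        exact mul_right_cancel₀ ht₂0 this
      -- sum relation
      have hdiff : (l - l')*(p₂*d₂*t₂*(l+l') + 2*d₁*p₂*t₁) = 0 := by
        linear_combination hq - hq'
      have h2nd : p₂*d₂*t₂*(l+l') + 2*d₁*p₂*t₁ = 0 := by
        rcases mul_eq_zero.1 hdiff with h | h
        · exact absurd (sub_eq_zero.1 h) hll'
        · exact h
      -- product relation
      have hprodd : d₂*(p₂*t₂*(l*l') - (2*(d₁-p₂)*t₂ + 2*d₁*t₁)) = 0 := by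
        linear_combination (-1) * hq + l * h2nd
      have hprod : p₂*t₂*(l*l') = 2*(d₁-p₂)*t₂ + 2*d₁*t₁ := by
        rcases mul_eq_zero.1 hprodd with h | h
        · exact absurd h hd₂0
        · linarith [sub_eq_zero.1 h]
      have hlow : d₁*t₁ + (d₁-p₂)*t₂ < 0 := by
        have : p₂*t₂*(l*l') < 0 := by
          apply mul_neg_of_neg_of_pos
          · exact mul_neg_of_pos_of_neg hp₂ ht₂
          · exact mul_pos hl hl'
        linarith
      refine ⟨ht₁, ht₂, ?_, ?_⟩
      · rw [lt_div_iff_of_neg ht₂]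
        rw [div_mul_eq_mul_div, lt_div_iff₀ hd₁]
        nlinarith
      · rw [div_lt_iff_of_neg ht₂]
        -- Et > 0
        have hEt : p₂*d₁^2*t₁^2 - 2*d₁*d₂^2*t₁*t₂ - 2*d₂^2*(d₁-p₂)*t₂^2
            = p₂*(d₂*t₂*l + d₁*t₁)^2 := by linear_combination (-(d₂*t₂)) * hq
        have hx : d₂*t₂*l + d₁*t₁ ≠ 0 := by
          intro h
          -- then d₂*t₂*l' + d₁*t₁ = -(d₂*t₂*l + d₁*t₁) = 0 too, so l = l'
          have hsum : d₂*t₂*(l+l') + 2*d₁*t₁ = 0 := by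
            have hp : p₂ * (d₂*t₂*(l+l') + 2*d₁*t₁) = 0 := by linear_combination h2nd
            rcases mul_eq_zero.1 hp with h' | h'
            · exact absurd h' hp₂0
            · exact h'
          have hx' : d₂*t₂*l' + d₁*t₁ = 0 := by linarith [hsum, h]
          have : d₂*t₂*(l - l') = 0 := by linarith
          rcases mul_eq_zero.1 this with h' | h'
          · rcases mul_eq_zero.1 h' with h'' | h''
            · exact hd₂0 h''
            · exact ht₂0 h''
          · exact hll' (sub_eq_zero.1 h')
        have hEtpos : 0 < p₂*d₁^2*t₁^2 - 2*d₁*d₂^2*t₁*t₂ - 2*d₂^2*(d₁-p₂)*t₂^2 := by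
          rw [hEt]; positivity
        have hf := hf2 ht₁ ht₂
        have hpp : 0 < (t₁ - b*t₂)*(p₂*d₁^2*(t₁ + b*t₂) - 2*d₁*d₂^2*t₂) := by
          rw [← hfac]; exact hEtpos
        by_contra hcon
        push_neg at hcon
        have : (t₁ - b*t₂)*(p₂*d₁^2*(t₁ + b*t₂) - 2*d₁*d₂^2*t₂) ≤ 0 :=
          mul_nonpos_iff.2 (Or.inr ⟨by linarith, hf.le⟩)
        linarith
    · rintro ⟨ht₁, ht₂, hlow, hhigh⟩
      have ht₂0 : t₂ ≠ 0 := ht₂.ne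
      rw [div_lt_iff_of_neg ht₂] at hhigh
      have hlow' : d₁*t₁ + (d₁-p₂)*t₂ < 0 := by
        rw [lt_div_iff_of_neg ht₂, div_mul_eq_mul_div, lt_div_iff₀ hd₁] at hlow
        nlinarith
      have hEtpos : 0 < p₂*d₁^2*t₁^2 - 2*d₁*d₂^2*t₁*t₂ - 2*d₂^2*(d₁-p₂)*t₂^2 := by
        have hf := hf2 ht₁ ht₂
        rw [hfac]
        exact mul_pos (by linarith) hf
      set Et : ℝ := p₂*d₁^2*t₁^2 - 2*d₁*d₂^2*t₁*t₂ - 2*d₂^2*(d₁-p₂)*t₂^2 with hEt_def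
      clear_value Et
      have hσargpos : (0:ℝ) < p₂*Et := by positivity
      set σ : ℝ := Real.sqrt (p₂*Et) with hσ_def
      have hσ2 : σ^2 = p₂*Et := Real.sq_sqrt hσargpos.le
      have hσpos : 0 < σ := Real.sqrt_pos.2 hσargpos
      clear_value σ
      have hden : 0 < p₂*d₂*(-t₂) := by
        apply mul_pos (mul_pos hp₂ hd₂); linarith
      have hσlt : σ < d₁*p₂*t₁ := by
        have hm : 0 < 2*p₂*d₂^2*(-t₂) := mul_pos (by positivity) (by linarith)
        have hkey : 0 < (2*p₂*d₂^2*(-t₂)) * (-(d₁*t₁ + (d₁-p₂)*t₂)) :=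
          mul_pos hm (by linarith)
        have hsq : σ^2 < (d₁*p₂*t₁)^2 := by
          rw [hσ2, hEt_def]; linarith [hkey]
        exact lt_of_pow_lt_pow_left₀ 2 (by positivity) hsq
      set l : ℝ := (d₁*p₂*t₁ + σ)/(p₂*d₂*(-t₂)) with hl_def
      set l' : ℝ := (d₁*p₂*t₁ - σ)/(p₂*d₂*(-t₂)) with hl'_def
      clear_value l l'
      have hl : 0 < l := by
        rw [hl_def]
        apply div_pos _ hden
        have : 0 < d₁*p₂*t₁ := by positivity
        linarith
      have hl' : 0 < l' := by
        rw [hl'_def]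
        apply div_pos _ hden
        linarith
      have hll' : l ≠ l' := by
        have hlt : l' < l := by
          rw [hl_def, hl'_def, div_lt_div_iff₀ hden hden]
          nlinarith [hσpos, hden]
        exact ne_of_gt hlt
      have hσ2' : σ^2 = p₂*(p₂*d₁^2*t₁^2 - 2*d₁*d₂^2*t₁*t₂ - 2*d₂^2*(d₁-p₂)*t₂^2) := by
        rw [hσ2, hEt_def]
      have hlq : (p₂*d₂*(-t₂))*l = d₁*p₂*t₁ + σ := by
        rw [hl_def]; field_simp
      have hlq' : (p₂*d₂*(-t₂))*l' = d₁*p₂*t₁ - σ := by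
        rw [hl'_def]; field_simp
      have hq : p₂*d₂*t₂*l^2 + 2*d₁*p₂*t₁*l + 2*d₂*(d₁-p₂)*t₂ + 2*d₁*d₂*t₁ = 0 := by
        have h0 : (p₂*d₂*(-t₂)) * (p₂*d₂*t₂*l^2 + 2*d₁*p₂*t₁*l + 2*d₂*(d₁-p₂)*t₂ + 2*d₁*d₂*t₁) = 0 := by
          linear_combination (2*d₁*p₂*t₁ - (p₂*d₂*(-t₂)*l + (d₁*p₂*t₁+σ))) * hlq - hσ2'
        rcases mul_eq_zero.1 h0 with h | h
        · exact absurd h hden.ne'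
        · exact h
      have hq' : p₂*d₂*t₂*l'^2 + 2*d₁*p₂*t₁*l' + 2*d₂*(d₁-p₂)*t₂ + 2*d₁*d₂*t₁ = 0 := by
        have h0 : (p₂*d₂*(-t₂)) * (p₂*d₂*t₂*l'^2 + 2*d₁*p₂*t₁*l' + 2*d₂*(d₁-p₂)*t₂ + 2*d₁*d₂*t₁) = 0 := by
          linear_combination (2*d₁*p₂*t₁ - (p₂*d₂*(-t₂)*l' + (d₁*p₂*t₁-σ))) * hlq' - hσ2'
        rcases mul_eq_zero.1 h0 with h | h
        · exact absurd h hden.ne'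
        · exact h
      obtain ⟨hc, h1, h2⟩ := mk ht₂ l hl hq
      obtain ⟨hc', h1', h2'⟩ := mk ht₂ l' hl' hq'
      refine ⟨r₂ l / t₂, l, r₂ l' / t₂, l', hc, hc', hl, hl', ?_, h1, h2, h1', h2'⟩
      intro h
      have hr2 : r₂ l = r₂ l' := by
        field_simp at h
        exact h
      rw [hr₂ l, hr₂ l'] at hr2
      have hk : (0:ℝ) < p₂/(2*d₂) := by positivity
      have h3 : (p₂/(2*d₂))*(l - l') = 0 := by linear_combination -hr2
      rcases mul_eq_zero.1 h3 with h4 | h4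
      · exact hk.ne' h4
      · exact hll' (sub_eq_zero.1 h4)
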